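/- Let m ≥ 3, k ∈ {0, 1}, and let p be a real number with m/(m-k) < p < ∞. Then for every f ∈ L^p(ℝ^m), the function Q_k(f)(x) = ∫_0^1 t^{m-1-k} f(tx) dt is defined almost everywhere, belongs to L^p(ℝ^m), and satisfies ‖Q_k(f)‖_p ≤ (m(1 - 1/p) - k)^{-1} ‖f‖_p. -/

import Mathlib

open MeasureTheory ENNReal

lemma aux_iSup_min (a : ℝ≥0∞) : ⨆ n : ℕ, min a n = a := by
  refine le_antisymm (iSup_le fun n => min_le_left _ _) ?_
  rcases eq_or_ne a ⊤ with rfl | ha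
  · have : ⨆ n : ℕ, min (⊤ : ℝ≥0∞) n = ⨆ n : ℕ, (n : ℝ≥0∞) := by simp
    rw [this, ENNReal.iSup_natCast]
  · obtain ⟨n, hn⟩ := exists_nat_ge a.toReal
    refine le_trans ?_ (le_iSup _ n)
    rw [min_def]
    split_ifs with h
    · exact le_refl a
    · exact (h (by rwa [← ENNReal.ofReal_natCast, ← ENNReal.ofReal_toReal ha,
        ENNReal.ofReal_le_ofReal_iff (by positivity)])).elim

lemma aux_rpow_iSup {f : ℕ → ℝ≥0∞} {p : ℝ} (hp : 0 < p) :
    (⨆ n, f n) ^ p = ⨆ n, f n ^ p := by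
  refine Monotone.map_iSup_of_continuousAt ?_ (fun a b h => ENNReal.rpow_le_rpow h hp.le) ?_
  · exact (ENNReal.continuous_rpow_const (y := p)).continuousAt
  · simp [ENNReal.zero_rpow_of_pos hp]

/-- Minkowski's integral inequality, case `1 < p`, finite LHS. -/
lemma mink_aux {α β : Type*} [MeasurableSpace α] [MeasurableSpace β]
    (μ : Measure α) (ν : Measure β) [SFinite μ] [SFinite ν]
    {p q : ℝ} (hpq : p.HolderConjugate q)
    {F : α → β → ℝ≥0∞} (hF : Measurable (Function.uncurry F))
    (hfin : ∫⁻ x, (∫⁻ y, F x y ∂ν) ^ p ∂μ ≠ ⊤) :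
    (∫⁻ x, (∫⁻ y, F x y ∂ν) ^ p ∂μ) ^ (1/p) ≤ ∫⁻ y, (∫⁻ x, F x y ^ p ∂μ) ^ (1/p) ∂ν := by
  have hφm : Measurable fun x => ∫⁻ y, F x y ∂ν := hF.lintegral_prod_right'
  set φ : α → ℝ≥0∞ := fun x => ∫⁻ y, F x y ∂ν with hφ
  set I := ∫⁻ x, φ x ^ p ∂μ with hI
  rcases eq_or_ne I 0 with h0 | h0
  · rw [h0, ENNReal.zero_rpow_of_pos (by simp [hpq.pos])]; exact zero_le
  set R := ∫⁻ y, (∫⁻ x, F x y ^ p ∂μ) ^ (1/p) ∂ν with hR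
  have key : I ≤ R * I ^ (1/q) := by
    have e1 : I = ∫⁻ x, φ x * φ x ^ (p - 1) ∂μ := by
      refine lintegral_congr fun x => ?_
      rcases eq_or_ne (φ x) 0 with h | h
      · simp [h, ENNReal.zero_rpow_of_pos hpq.pos,
          ENNReal.zero_rpow_of_pos (by linarith [hpq.lt] : (0:ℝ) < p - 1)]
      rcases eq_or_ne (φ x) ⊤ with h' | h'
      · rw [h', ENNReal.top_rpow_of_pos hpq.pos,
          ENNReal.top_rpow_of_pos (by linarith [hpq.lt]), ENNReal.top_mul_top]
      · nth_rewrite 1 [show p = 1 + (p - 1) by ring]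
        rw [ENNReal.rpow_add _ _ h h', ENNReal.rpow_one]
    have e2 : ∀ x, φ x * φ x ^ (p - 1) = ∫⁻ y, F x y * φ x ^ (p - 1) ∂ν := fun x =>
      (lintegral_mul_const _ (hF.of_uncurry_left)).symm
    have e3 : (∫⁻ x, ∫⁻ y, F x y * φ x ^ (p - 1) ∂ν ∂μ)
        = ∫⁻ y, ∫⁻ x, F x y * φ x ^ (p - 1) ∂μ ∂ν := by
      refine lintegral_lintegral_swap ?_
      exact (hF.mul ((hφm.comp measurable_fst).pow_const _)).aemeasurable
    have e4 : ∀ y, (∫⁻ x, F x y * φ x ^ (p - 1) ∂μ)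
        ≤ (∫⁻ x, F x y ^ p ∂μ) ^ (1/p) * (∫⁻ x, (φ x ^ (p - 1)) ^ q ∂μ) ^ (1/q) := fun y =>
      ENNReal.lintegral_mul_le_Lp_mul_Lq μ hpq (hF.of_uncurry_right).aemeasurable
        ((hφm.pow_const _)).aemeasurable
    have e5 : (∫⁻ x, (φ x ^ (p - 1)) ^ q ∂μ) ^ (1/q) = I ^ (1/q) := by
      congr 1
      refine lintegral_congr fun x => ?_
      rw [← ENNReal.rpow_mul, hpq.sub_one_mul_conj]
    have hmy : Measurable fun y => (∫⁻ x, F x y ^ p ∂μ) ^ (1/p) :=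
      ((hF.pow_const p).lintegral_prod_left').pow_const _
    calc I = ∫⁻ x, ∫⁻ y, F x y * φ x ^ (p - 1) ∂ν ∂μ := by
            rw [e1]; exact lintegral_congr fun x => e2 x
      _ = ∫⁻ y, ∫⁻ x, F x y * φ x ^ (p - 1) ∂μ ∂ν := e3
      _ ≤ ∫⁻ y, (∫⁻ x, F x y ^ p ∂μ) ^ (1/p) * I ^ (1/q) ∂ν := by
            refine lintegral_mono fun y => ?_
            rw [← e5]; exact e4 y
      _ = R * I ^ (1/q) := lintegral_mul_const _ hmy
  have hq0 : I ^ (1/q) ≠ 0 := by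
    simp only [ne_eq, ENNReal.rpow_eq_zero_iff, not_or]
    refine ⟨?_, ?_⟩
    · rintro ⟨h, -⟩; exact h0 h
    · rintro ⟨h, -⟩; exact hfin h
  have hqt : I ^ (1/q) ≠ ⊤ := by
    simp only [ne_eq, ENNReal.rpow_eq_top_iff, not_or]
    constructor
    · rintro ⟨-, h⟩
      exact absurd h (by simpa using hpq.symm.pos : (0:ℝ) < 1/q).not_gt
    · rintro ⟨h, -⟩; exact hfin h
  have h1 : I ^ (1/p) * I ^ (1/q) = I := by
    rw [← ENNReal.rpow_add _ _ h0 hfin, one_div, one_div, hpq.inv_add_inv_eq_one,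
      ENNReal.rpow_one]
  refine (ENNReal.mul_le_mul_iff_left hq0 hqt).mp ?_
  rw [h1]; exact key

/-- Minkowski's integral inequality. -/
lemma mink {α β : Type*} [MeasurableSpace α] [MeasurableSpace β]
    (μ : Measure α) (ν : Measure β) [SigmaFinite μ] [SigmaFinite ν]
    {p : ℝ} (hp : 1 ≤ p) {F : α → β → ℝ≥0∞} (hF : Measurable (Function.uncurry F)) :
    (∫⁻ x, (∫⁻ y, F x y ∂ν) ^ p ∂μ) ^ (1/p) ≤ ∫⁻ y, (∫⁻ x, F x y ^ p ∂μ) ^ (1/p) ∂ν := by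
  rcases eq_or_lt_of_le hp with rfl | hp1
  · simp only [ENNReal.rpow_one, one_div_one]
    exact le_of_eq (lintegral_lintegral_swap hF.aemeasurable)
  have hppos : (0:ℝ) < p := by linarith
  set G : ℕ → α → β → ℝ≥0∞ := fun n x y =>
    (spanningSets μ n).indicator (fun _ => 1) x *
      ((spanningSets ν n).indicator (fun _ => 1) y * min (F x y) n) with hG
  have hGmeas : ∀ n, Measurable (Function.uncurry (G n)) := fun n => by
    refine Measurable.mul ?_ (Measurable.mul ?_ ?_)
    · exact (measurable_const.indicator (measurableSet_spanningSets μ n)).comp measurable_fst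
    · exact (measurable_const.indicator (measurableSet_spanningSets ν n)).comp measurable_snd
    · exact hF.min measurable_const
  have hGmono : ∀ x y, Monotone fun n => G n x y := by
    intro x y a b hab
    refine mul_le_mul' ?_ (mul_le_mul' ?_ ?_)
    · exact Set.indicator_le_indicator_of_subset (monotone_spanningSets μ hab)
        (fun _ => zero_le) x
    · exact Set.indicator_le_indicator_of_subset (monotone_spanningSets ν hab)
        (fun _ => zero_le) y
    · exact min_le_min le_rfl (Nat.cast_le.2 hab)
  have hGleF : ∀ n x y, G n x y ≤ F x y := by
    intro n x y
    rw [hG]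
    by_cases hx : x ∈ spanningSets μ n
    · by_cases hy : y ∈ spanningSets ν n
      · simp only [Set.indicator_of_mem hx, Set.indicator_of_mem hy, one_mul]
        exact min_le_left _ _
      · simp [Set.indicator_of_notMem hy]
    · simp [Set.indicator_of_notMem hx]
  have hGsup : ∀ x y, (⨆ n, G n x y) = F x y := by
    intro x y
    refine le_antisymm (iSup_le fun n => hGleF n x y) ?_
    obtain ⟨N₁, hN₁⟩ := Set.mem_iUnion.1
      ((iUnion_spanningSets μ).symm ▸ Set.mem_univ x : x ∈ ⋃ n, spanningSets μ n)
    obtain ⟨N₂, hN₂⟩ := Set.mem_iUnion.1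
      ((iUnion_spanningSets ν).symm ▸ Set.mem_univ y : y ∈ ⋃ n, spanningSets ν n)
    conv_lhs => rw [← aux_iSup_min (F x y)]
    refine iSup_le fun n => le_trans ?_ (le_iSup _ (max n (max N₁ N₂)))
    have hx : x ∈ spanningSets μ (max n (max N₁ N₂)) :=
      monotone_spanningSets μ (le_trans (le_max_left _ _) (le_max_right _ _)) hN₁
    have hy : y ∈ spanningSets ν (max n (max N₁ N₂)) :=
      monotone_spanningSets ν (le_trans (le_max_right _ _) (le_max_right _ _)) hN₂
    rw [hG]
    simp only [Set.indicator_of_mem hx, Set.indicator_of_mem hy, one_mul]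
    exact min_le_min le_rfl (Nat.cast_le.2 (le_max_left _ _))
  have hinner_meas : ∀ n, Measurable fun x => ∫⁻ y, G n x y ∂ν := fun n =>
    (hGmeas n).lintegral_prod_right'
  have hfin : ∀ n, ∫⁻ x, (∫⁻ y, G n x y ∂ν) ^ p ∂μ ≠ ⊤ := by
    intro n
    refine ne_of_lt ?_
    set c : ℝ≥0∞ := (n : ℝ≥0∞) * ν (spanningSets ν n) with hc
    have hcfin : c ≠ ⊤ :=
      ENNReal.mul_ne_top (ENNReal.natCast_ne_top n) (measure_spanningSets_lt_top ν n).ne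
    have hb : ∀ x, (∫⁻ y, G n x y ∂ν) ≤ (spanningSets μ n).indicator (fun _ => c) x := by
      intro x
      by_cases hx : x ∈ spanningSets μ n
      · rw [Set.indicator_of_mem hx]
        calc (∫⁻ y, G n x y ∂ν)
            ≤ ∫⁻ y, (spanningSets ν n).indicator (fun _ => (n : ℝ≥0∞)) y ∂ν := by
              refine lintegral_mono fun y => ?_
              by_cases hy : y ∈ spanningSets ν n
              · rw [hG]
                simp only [Set.indicator_of_mem hy]
                refine le_trans (mul_le_mul' (Set.indicator_le'
                  (fun _ _ => le_rfl) (fun _ _ => zero_le) x) le_rfl) ?_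
                rw [one_mul, one_mul]
                exact min_le_right _ _
              · rw [hG]
                simp [Set.indicator_of_notMem hy]
          _ = c := by
              rw [lintegral_indicator (measurableSet_spanningSets ν n), setLIntegral_const,
                hc, mul_comm]
      · rw [Set.indicator_of_notMem hx, hG]
        simp [Set.indicator_of_notMem hx]
    calc (∫⁻ x, (∫⁻ y, G n x y ∂ν) ^ p ∂μ)
        ≤ ∫⁻ x, (spanningSets μ n).indicator (fun _ => c ^ p) x ∂μ := by
          refine lintegral_mono fun x => ?_
          refine le_trans (ENNReal.rpow_le_rpow (hb x) hppos.le) ?_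
          by_cases hx : x ∈ spanningSets μ n
          · simp [Set.indicator_of_mem hx]
          · simp [Set.indicator_of_notMem hx, ENNReal.zero_rpow_of_pos hppos]
      _ = c ^ p * μ (spanningSets μ n) := by
          rw [lintegral_indicator (measurableSet_spanningSets μ n), setLIntegral_const]
      _ < ⊤ := ENNReal.mul_lt_top (ENNReal.rpow_lt_top_of_nonneg hppos.le hcfin)
          (measure_spanningSets_lt_top μ n)
  have hq : p.HolderConjugate (Real.conjExponent p) := .conjExponent hp1
  have step : ∀ n, (∫⁻ x, (∫⁻ y, G n x y ∂ν) ^ p ∂μ) ^ (1/p)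
      ≤ ∫⁻ y, (∫⁻ x, F x y ^ p ∂μ) ^ (1/p) ∂ν := by
    intro n
    refine le_trans (mink_aux μ ν hq (hGmeas n) (hfin n)) ?_
    refine lintegral_mono fun y => ?_
    refine ENNReal.rpow_le_rpow (lintegral_mono fun x => ?_) (by positivity)
    exact ENNReal.rpow_le_rpow (hGleF n x y) hppos.le
  have hlim : ∫⁻ x, (∫⁻ y, F x y ∂ν) ^ p ∂μ
      = ⨆ n, ∫⁻ x, (∫⁻ y, G n x y ∂ν) ^ p ∂μ := by
    rw [← lintegral_iSup (fun n => (hinner_meas n).pow_const p)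
      (fun a b hab x => ENNReal.rpow_le_rpow (lintegral_mono fun y => hGmono x y hab) hppos.le)]
    refine lintegral_congr fun x => ?_
    rw [← aux_rpow_iSup hppos]
    congr 1
    rw [← lintegral_iSup (fun n => (hGmeas n).of_uncurry_left) (fun a b hab y => hGmono x y hab)]
    exact lintegral_congr fun y => (hGsup x y).symm
  rw [hlim, aux_rpow_iSup (by positivity : (0:ℝ) < 1/p)]
  exact iSup_le step

lemma scale_lintegral {m : ℕ} {h : EuclideanSpace ℝ (Fin m) → ENNReal} (hh : Measurable h)
    {t : ℝ} (ht : t ≠ 0) :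
    ∫⁻ x, h (t • x) = ENNReal.ofReal |(t ^ m)⁻¹| * ∫⁻ x, h x := by
  rw [← lintegral_map hh ((continuous_const_smul t).measurable),
    Measure.map_addHaar_smul volume ht, finrank_euclideanSpace_fin,
    lintegral_smul_measure, smul_eq_mul]

lemma ae_ae_smul_eq {m : ℕ} {f g : EuclideanSpace ℝ (Fin m) → ℝ} (hfg : f =ᵐ[volume] g) :
    ∀ᵐ x : EuclideanSpace ℝ (Fin m), ∀ᵐ t : ℝ,
      t ∈ Set.Ioc (0:ℝ) 1 → f (t • x) = g (t • x) := by
  obtain ⟨S, hSsub, hSm, hS0⟩ :=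
    exists_measurable_superset_of_null (ae_iff.mp hfg)
  set A : Set (EuclideanSpace ℝ (Fin m) × ℝ) :=
    {z | z.2 ∈ Set.Ioc (0:ℝ) 1 ∧ z.2 • z.1 ∈ S} with hA
  have hAm : MeasurableSet A :=
    (measurable_snd measurableSet_Ioc).inter ((measurable_snd.smul measurable_fst) hSm)
  have hslice : ∀ t : ℝ, volume ((fun x => (x, t)) ⁻¹' A) = 0 := by
    intro t
    by_cases ht : t ∈ Set.Ioc (0:ℝ) 1
    · have he : (fun x : EuclideanSpace ℝ (Fin m) => (x, t)) ⁻¹' A = (t • ·) ⁻¹' S := by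
        ext x; simp only [hA, Set.mem_preimage, Set.mem_setOf_eq]; exact ⟨fun h => h.2, fun h => ⟨ht, h⟩⟩
      rw [he, ← Measure.map_apply ((continuous_const_smul t).measurable) hSm,
        Measure.map_addHaar_smul volume (ne_of_gt ht.1), Measure.smul_apply, hS0]
      simp
    · have he : (fun x : EuclideanSpace ℝ (Fin m) => (x, t)) ⁻¹' A = ∅ := by
        ext x
        simp only [hA, Set.mem_preimage, Set.mem_setOf_eq, Set.mem_empty_iff_false, iff_false]
        exact fun h => ht h.1
      simp [he]
  have hA0 : (volume.prod volume) A = 0 := by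
    rw [Measure.prod_apply_symm hAm]
    simp [hslice]
  have hae : ∀ᵐ z : EuclideanSpace ℝ (Fin m) × ℝ ∂(volume.prod volume), z ∉ A :=
    (ae_iff.2 (by simpa using hA0))
  filter_upwards [Measure.ae_ae_of_ae_prod hae] with x hx
  filter_upwards [hx] with t hxt htIoc
  have : ¬ (t ∈ Set.Ioc (0:ℝ) 1 ∧ t • x ∈ S) := hxt
  have hns : t • x ∉ S := fun hmem => this ⟨htIoc, hmem⟩
  by_contra hne
  exact hns (hSsub hne)


lemma lintegral_rpow_Ioc {r : ℝ} (hr : -1 < r) :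
    ∫⁻ t in Set.Ioc (0:ℝ) 1, ENNReal.ofReal (t ^ r) = ENNReal.ofReal ((r+1)⁻¹) := by
  have hint : IntegrableOn (fun t : ℝ => t ^ r) (Set.Ioc 0 1) := by
    have := intervalIntegral.intervalIntegrable_rpow' (a := (0:ℝ)) (b := 1) hr
    rwa [intervalIntegrable_iff_integrableOn_Ioc_of_le zero_le_one] at this
  rw [← ofReal_integral_eq_lintegral_ofReal hint ?_]
  · congr 1
    rw [← intervalIntegral.integral_of_le zero_le_one, integral_rpow (Or.inl hr),
      Real.one_rpow, Real.zero_rpow (by linarith), sub_zero, one_div]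
  · filter_upwards [ae_restrict_mem measurableSet_Ioc] with t ht
    exact Real.rpow_nonneg ht.1.le r



/-- For `m ≥ 3`, `k ∈ {0,1}`, `m/(m-k) < p < ∞` and `f ∈ L^p(ℝ^m)`, the
function `Q_k(f)(x) = ∫_0^1 t^(m-1-k) f(tx) dt` is defined a.e. (the integrand is
integrable for a.e. `x`), belongs to `L^p`, and `‖Q_k f‖_p ≤ (m(1-1/p)-k)⁻¹ ‖f‖_p`. -/
theorem stmt1 (m : ℕ) (hm : 3 ≤ m) (k : ℕ) (hk : k = 0 ∨ k = 1) (p : ℝ)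
    (hp : (m : ℝ) / ((m : ℝ) - k) < p)
    (f : EuclideanSpace ℝ (Fin m) → ℝ)
    (hf : MemLp f (ENNReal.ofReal p) volume) :
    (∀ᵐ x : EuclideanSpace ℝ (Fin m), IntegrableOn
        (fun t : ℝ => t ^ (m - 1 - k) * f (t • x)) (Set.Ioc 0 1) volume) ∧
    MemLp (fun x : EuclideanSpace ℝ (Fin m) =>
        ∫ t in (0:ℝ)..1, t ^ (m - 1 - k) * f (t • x)) (ENNReal.ofReal p) volume ∧
    eLpNorm (fun x : EuclideanSpace ℝ (Fin m) =>
        ∫ t in (0:ℝ)..1, t ^ (m - 1 - k) * f (t • x)) (ENNReal.ofReal p) volume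
      ≤ ENNReal.ofReal (((m : ℝ) * (1 - 1 / p) - k)⁻¹) *
          eLpNorm f (ENNReal.ofReal p) volume := by
  have hkm : k < m := by omega
  have hmk : (0:ℝ) < (m:ℝ) - k := by
    rw [sub_pos]; exact_mod_cast hkm
  have hm0 : (0:ℝ) < m := by positivity
  have h1p : 1 < p := by
    refine lt_of_le_of_lt ?_ hp
    rw [le_div_iff₀ hmk, one_mul]
    have : (k:ℝ) ≥ 0 := Nat.cast_nonneg k
    linarith
  have hp0 : 0 < p := by linarith
  set a := m - 1 - k with ha
  have haR : (a:ℝ) = (m:ℝ) - 1 - k := by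
    have h' : a + k + 1 = m := by omega
    have := congrArg (fun n : ℕ => (n:ℝ)) h'
    push_cast at this
    linarith
  set r := (a:ℝ) - (m:ℝ) / p with hrdef
  have hrgt : -1 < r := by
    have h2 : (m:ℝ) < p * ((m:ℝ) - k) := (div_lt_iff₀ hmk).mp hp
    have h3 : (m:ℝ)/p < (m:ℝ) - k := (div_lt_iff₀ hp0).mpr (by linarith)
    rw [hrdef, haR]; linarith
  have hrp1 : r + 1 = (m:ℝ) * (1 - 1/p) - k := by
    rw [hrdef, haR]; field_simp; ring
  set pE := ENNReal.ofReal p with hpEdef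
  have hpE0 : pE ≠ 0 := by
    simp only [hpEdef, ne_eq, ENNReal.ofReal_eq_zero, not_le]; linarith
  have hpEt : pE ≠ ⊤ := ENNReal.ofReal_ne_top
  have hpEtoReal : pE.toReal = p := ENNReal.toReal_ofReal hp0.le
  -- measurable representative
  set g := hf.1.mk f with hgdef
  have hgsm : StronglyMeasurable g := hf.1.stronglyMeasurable_mk
  have hfg : f =ᵐ[volume] g := hf.1.ae_eq_mk
  have hgm : Measurable g := hgsm.measurable
  have heLfg : eLpNorm f pE volume = eLpNorm g pE volume := eLpNorm_congr_ae hfg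
  set N := ∫⁻ x, (‖g x‖₊ : ENNReal) ^ p ∂volume with hNdef
  have hNlt : N < ⊤ := by
    have := lintegral_rpow_enorm_lt_top_of_eLpNorm_lt_top hpE0 hpEt
      (heLfg ▸ hf.2 : eLpNorm g pE volume < ⊤)
    rwa [hpEtoReal] at this
  have heLg : eLpNorm g pE volume = N ^ (1/p) := by
    rw [eLpNorm_eq_lintegral_rpow_enorm_toReal hpE0 hpEt, hpEtoReal]
    rfl
  -- the kernel
  set F : EuclideanSpace ℝ (Fin m) → ℝ → ENNReal := fun x t =>
    (Set.Ioc (0:ℝ) 1).indicator (fun s => (‖s ^ a * g (s • x)‖₊ : ENNReal)) t with hFdef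
  have hcore : Measurable fun z : EuclideanSpace ℝ (Fin m) × ℝ =>
      (‖z.2 ^ a * g (z.2 • z.1)‖₊ : ENNReal) := by
    refine Measurable.coe_nnreal_ennreal (Measurable.nnnorm ?_)
    exact (measurable_snd.pow_const a).mul
      (hgm.comp (measurable_snd.smul measurable_fst))
  have hFm : Measurable (Function.uncurry F) := by
    have he : Function.uncurry F = fun z : EuclideanSpace ℝ (Fin m) × ℝ =>
        Set.indicator {z : EuclideanSpace ℝ (Fin m) × ℝ | z.2 ∈ Set.Ioc (0:ℝ) 1}
          (fun z => (‖z.2 ^ a * g (z.2 • z.1)‖₊ : ENNReal)) z := by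
      ext z
      simp only [Function.uncurry, hFdef, Set.indicator_apply, Set.mem_setOf_eq]
    rw [he]
    exact hcore.indicator (measurable_snd measurableSet_Ioc)
  set Φ : EuclideanSpace ℝ (Fin m) → ENNReal := fun x => ∫⁻ t, F x t with hΦdef
  have hΦeq : ∀ x, Φ x = ∫⁻ t in Set.Ioc (0:ℝ) 1, (‖t ^ a * g (t • x)‖₊ : ENNReal) :=
    fun x => lintegral_indicator measurableSet_Ioc _
  have hΦm : Measurable Φ := hFm.lintegral_prod_right'
  -- Minkowski
  have hmink := mink volume volume h1p.le hFm
  -- compute the RHS of Minkowski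
  have hgp : Measurable fun y : EuclideanSpace ℝ (Fin m) => (‖g y‖₊ : ENNReal) ^ p :=
    (hgm.nnnorm.coe_nnreal_ennreal).pow_const p
  have hRHS : (∫⁻ t, (∫⁻ x, F x t ^ p ∂volume) ^ (1/p) ∂volume)
      = ENNReal.ofReal ((r+1)⁻¹) * N ^ (1/p) := by
    have hpoint : ∀ t : ℝ, (∫⁻ x, F x t ^ p ∂volume) ^ (1/p)
        = (Set.Ioc (0:ℝ) 1).indicator (fun s => ENNReal.ofReal (s ^ r)) t * N ^ (1/p) := by
      intro t
      by_cases ht : t ∈ Set.Ioc (0:ℝ) 1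
      · have ht0 : 0 < t := ht.1
        have hFt : ∀ x, F x t = (‖t ^ a * g (t • x)‖₊ : ENNReal) := fun x => by
          rw [hFdef]; exact Set.indicator_of_mem ht _
        have step1 : (∫⁻ x, F x t ^ p ∂volume)
            = (‖t ^ a‖₊ : ENNReal) ^ p * (ENNReal.ofReal ((t ^ m)⁻¹) * N) := by
          have : ∀ x, F x t ^ p
              = (‖t ^ a‖₊ : ENNReal) ^ p * (‖g (t • x)‖₊ : ENNReal) ^ p := fun x => by
            rw [hFt x, nnnorm_mul, ENNReal.coe_mul,
              ENNReal.mul_rpow_of_nonneg _ _ hp0.le]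
          have hsc : (∫⁻ x, (‖g (t • x)‖₊ : ENNReal) ^ p ∂volume)
              = ENNReal.ofReal ((t ^ m)⁻¹) * N := by
            rw [← abs_of_pos (show (0:ℝ) < (t ^ m)⁻¹ by positivity)]
            exact scale_lintegral hgp (ne_of_gt ht0)
          rw [lintegral_congr this, lintegral_const_mul _
            (show Measurable fun x : EuclideanSpace ℝ (Fin m) => (‖g (t • x)‖₊ : ENNReal) ^ p from
              ((hgm.comp ((continuous_const_smul t).measurable)).nnnorm.coe_nnreal_ennreal.pow_const p)),
            hsc]
        rw [step1, Set.indicator_of_mem ht]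
        rw [ENNReal.mul_rpow_of_nonneg _ _ (by positivity : (0:ℝ) ≤ 1/p),
          ENNReal.mul_rpow_of_nonneg _ _ (by positivity : (0:ℝ) ≤ 1/p),
          ← ENNReal.rpow_mul, mul_one_div_cancel (ne_of_gt hp0), ENNReal.rpow_one,
          ← mul_assoc]
        congr 1
        rw [← enorm_eq_nnnorm, Real.enorm_eq_ofReal (by positivity : (0:ℝ) ≤ t ^ a),
          ENNReal.ofReal_rpow_of_pos (by positivity),
          ← ENNReal.ofReal_mul (by positivity)]
        congr 1
        have hinv : ((t:ℝ) ^ m)⁻¹ = t ^ (-(m:ℝ)) := by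
          rw [Real.rpow_neg ht0.le, Real.rpow_natCast]
        rw [hinv, ← Real.rpow_natCast t a, ← Real.rpow_mul ht0.le, ← Real.rpow_add ht0,
          hrdef]
        congr 1
        ring
      · have hFt : ∀ x, F x t = 0 := fun x => by
          rw [hFdef]; exact Set.indicator_of_notMem ht _
        have h1 : (∫⁻ x, F x t ^ p ∂volume) = 0 := by
          have h2 : ∀ x : EuclideanSpace ℝ (Fin m), F x t ^ p = 0 := fun x => by
            rw [hFt x, ENNReal.zero_rpow_of_pos hp0]
          rw [lintegral_congr h2, lintegral_zero]
        rw [h1, Set.indicator_of_notMem ht, zero_mul,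
          ENNReal.zero_rpow_of_pos (by positivity : (0:ℝ) < 1/p)]
    calc (∫⁻ t, (∫⁻ x, F x t ^ p ∂volume) ^ (1/p) ∂volume)
        = ∫⁻ t, (Set.Ioc (0:ℝ) 1).indicator (fun s => ENNReal.ofReal (s ^ r)) t
            * N ^ (1/p) ∂volume := lintegral_congr hpoint
      _ = (∫⁻ t, (Set.Ioc (0:ℝ) 1).indicator (fun s => ENNReal.ofReal (s ^ r)) t ∂volume)
            * N ^ (1/p) := lintegral_mul_const' _ _
              (by exact ENNReal.rpow_ne_top_of_nonneg (by positivity) hNlt.ne)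
      _ = ENNReal.ofReal ((r+1)⁻¹) * N ^ (1/p) := by
          rw [lintegral_indicator measurableSet_Ioc, lintegral_rpow_Ioc hrgt]
  rw [hRHS] at hmink
  have hC_lt : ENNReal.ofReal ((r+1)⁻¹) * N ^ (1/p) < ⊤ :=
    ENNReal.mul_lt_top ENNReal.ofReal_lt_top
      (ENNReal.rpow_lt_top_of_nonneg (by positivity) hNlt.ne)
  have hIfin : (∫⁻ x, Φ x ^ p ∂volume) ≠ ⊤ := by
    intro htop
    rw [htop, ENNReal.top_rpow_of_pos (by positivity)] at hmink
    exact (lt_irrefl _ (lt_of_le_of_lt hmink hC_lt)).elim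
  have hΦae : ∀ᵐ x : EuclideanSpace ℝ (Fin m), Φ x < ⊤ := by
    have h := ae_lt_top (hΦm.pow_const p) hIfin
    filter_upwards [h] with x hx
    by_contra hcon
    rw [not_lt, top_le_iff] at hcon
    rw [hcon, ENNReal.top_rpow_of_pos hp0] at hx
    exact lt_irrefl _ hx
  have hsmulmeas : ∀ x : EuclideanSpace ℝ (Fin m), Measurable fun t : ℝ => t • x := fun x =>
    (continuous_id.smul continuous_const).measurable
  have hint_g : ∀ᵐ x : EuclideanSpace ℝ (Fin m), IntegrableOn
      (fun t : ℝ => t ^ a * g (t • x)) (Set.Ioc 0 1) volume := by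
    filter_upwards [hΦae] with x hx
    refine ⟨((measurable_id.pow_const a).mul
      (hgm.comp (hsmulmeas x))).aestronglyMeasurable, ?_⟩
    have hx' := hx
    rw [hΦeq x] at hx'
    exact hx'
  have hpart1 : ∀ᵐ x : EuclideanSpace ℝ (Fin m), IntegrableOn
      (fun t : ℝ => t ^ a * f (t • x)) (Set.Ioc 0 1) volume := by
    filter_upwards [hint_g, ae_ae_smul_eq hfg] with x hx1 hx2
    refine hx1.congr ?_
    refine (ae_restrict_iff' measurableSet_Ioc).mpr ?_
    filter_upwards [hx2] with t h3 ht
    rw [h3 ht]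
  set Gg : EuclideanSpace ℝ (Fin m) → ℝ :=
    fun x => ∫ t in Set.Ioc (0:ℝ) 1, t ^ a * g (t • x) with hGgdef
  have hcoresm : StronglyMeasurable fun z : EuclideanSpace ℝ (Fin m) × ℝ =>
      z.2 ^ a * g (z.2 • z.1) :=
    ((measurable_snd.pow_const a).mul
      (hgm.comp (measurable_snd.smul measurable_fst))).stronglyMeasurable
  have hGgsm : StronglyMeasurable Gg := hcoresm.integral_prod_right'
  have haeeq : (fun x : EuclideanSpace ℝ (Fin m) =>
      ∫ t in (0:ℝ)..1, t ^ a * f (t • x)) =ᵐ[volume] Gg := by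
    filter_upwards [ae_ae_smul_eq hfg] with x hx
    rw [intervalIntegral.integral_of_le zero_le_one]
    refine setIntegral_congr_ae measurableSet_Ioc ?_
    filter_upwards [hx] with t h3 ht
    rw [h3 ht]
  have hGgnorm : ∀ x, (‖Gg x‖₊ : ENNReal) ≤ Φ x := fun x => by
    rw [hΦeq x, hGgdef]
    exact enorm_integral_le_lintegral_enorm _
  have heLGg : eLpNorm Gg pE volume ≤ ENNReal.ofReal ((r+1)⁻¹) * N ^ (1/p) := by
    rw [eLpNorm_eq_lintegral_rpow_enorm_toReal hpE0 hpEt, hpEtoReal]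
    refine le_trans ?_ hmink
    exact ENNReal.rpow_le_rpow (lintegral_mono fun x =>
      ENNReal.rpow_le_rpow (hGgnorm x) hp0.le) (by positivity)
  refine ⟨hpart1, ?_, ?_⟩
  · refine ⟨hGgsm.aestronglyMeasurable.congr haeeq.symm, ?_⟩
    rw [eLpNorm_congr_ae haeeq]
    exact lt_of_le_of_lt heLGg hC_lt
  · calc eLpNorm (fun x : EuclideanSpace ℝ (Fin m) =>
          ∫ t in (0:ℝ)..1, t ^ a * f (t • x)) pE volume
        = eLpNorm Gg pE volume := eLpNorm_congr_ae haeeq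
      _ ≤ ENNReal.ofReal ((r+1)⁻¹) * N ^ (1/p) := heLGg
      _ = ENNReal.ofReal (((m:ℝ) * (1 - 1/p) - k)⁻¹) * eLpNorm f pE volume := by
          rw [← hrp1, heLfg, heLg]
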